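/- Let d ≥ 1 and for each n ≥ 0 let T_n : ℝ^d → ℝ^d be a linear map. Then the limit as ε → 0 of the limsup over n of (1/n) log of the maximal cardinality of a set S ⊆ ℝ^d such that (i) for every 0 ≤ k < n the diameter of T_{k-1}∘⋯∘T_0(S) is at most 1, and (ii) for all distinct x, y ∈ S there exists 0 ≤ k < n with ‖T_{k-1}∘⋯∘T_0(x−y)‖ > ε, is equal to 0. -/
import Mathlib


open Filter Metric

/-- Composition `T_{k-1} ∘ ⋯ ∘ T_0` of the first `k` linear maps (identity for `k = 0`). -/
noncomputable def compMaps {d : ℕ} (T : ℕ → (EuclideanSpace ℝ (Fin d) →ₗ[ℝ] EuclideanSpace ℝ (Fin d))) :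
    ℕ → (EuclideanSpace ℝ (Fin d) →ₗ[ℝ] EuclideanSpace ℝ (Fin d))
  | 0 => LinearMap.id
  | (k + 1) => (T k).comp (compMaps T k)

/-- Maximal cardinality of a set `S` which stays of diameter `≤ 1` during `n` steps while
any two of its points get `ε`-separated at some time `k < n`. -/
noncomputable def sepMaxCard {d : ℕ}
    (T : ℕ → (EuclideanSpace ℝ (Fin d) →ₗ[ℝ] EuclideanSpace ℝ (Fin d)))
    (ε : ℝ) (n : ℕ) : ℕ :=
  sSup {m : ℕ | ∃ S : Finset (EuclideanSpace ℝ (Fin d)), S.card = m ∧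
    (∀ k < n, Metric.diam ((compMaps T k) '' (S : Set (EuclideanSpace ℝ (Fin d)))) ≤ 1) ∧
    (∀ x ∈ S, ∀ y ∈ S, x ≠ y → ∃ k < n, ε < ‖(compMaps T k) (x - y)‖)}

open MeasureTheory in
open scoped ENNReal NNReal in
/-- A volume (packing) bound: in a finite-dimensional real normed space, a set of diameter
at most `1` whose points are pairwise `ε`-separated has at most `((2+ε)/ε)^dim` elements. -/
lemma card_le_of_sep {E : Type*} [NormedAddCommGroup E] [NormedSpace ℝ E]
    [FiniteDimensional ℝ E]
    {ε : ℝ} (hε : 0 < ε) (S : Finset E)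
    (h1 : ∀ x ∈ S, ∀ y ∈ S, ‖x - y‖ ≤ 1)
    (h2 : ∀ x ∈ S, ∀ y ∈ S, x ≠ y → ε < ‖x - y‖) :
    (S.card : ℝ) ≤ ((2 + ε) / ε) ^ Module.finrank ℝ E := by
  have hbase : (0:ℝ) < (2 + ε) / ε := by positivity
  rcases S.eq_empty_or_nonempty with rfl | ⟨x₀, hx₀⟩
  · simpa using (pow_pos hbase _).le
  borelize E
  set m := Module.finrank ℝ E with hm
  set μ : Measure E := (Module.finBasis ℝ E).addHaar with hμ
  have hhaar : μ.IsAddHaarMeasure := by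
    rw [hμ]; infer_instance
  have hdisj : (S : Set E).Pairwise (Function.onFun Disjoint fun x => ball x (ε/2)) := by
    intro x hx y hy hxy
    apply ball_disjoint_ball
    rw [dist_eq_norm]
    linarith [h2 x hx y hy hxy]
  have hsub : ∀ x ∈ S, ball x (ε/2) ⊆ ball x₀ (ε/2 + 1) := by
    intro x hx z hz
    rw [mem_ball] at hz ⊢
    have := h1 x hx x₀ hx₀
    rw [← dist_eq_norm] at this
    calc dist z x₀ ≤ dist z x + dist x x₀ := dist_triangle _ _ _
      _ < ε/2 + 1 := by linarith
  have hmeas : μ (⋃ x ∈ S, ball x (ε/2)) = ∑ x ∈ S, μ (ball x (ε/2)) :=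
    measure_biUnion_finset hdisj (fun x _ => measurableSet_ball)
  have hle : ∑ x ∈ S, μ (ball x (ε/2)) ≤ μ (ball x₀ (ε/2 + 1)) := by
    rw [← hmeas]
    exact measure_mono (Set.iUnion₂_subset hsub)
  have hballs : ∀ x : E, μ (ball x (ε/2)) = ENNReal.ofReal ((ε/2) ^ m) * μ (ball 0 1) :=
    fun x => Measure.addHaar_ball_of_pos μ x (by linarith)
  have hbig : μ (ball x₀ (ε/2 + 1)) = ENNReal.ofReal ((ε/2 + 1) ^ m) * μ (ball 0 1) :=
    Measure.addHaar_ball_of_pos μ x₀ (by linarith)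
  have hc0 : μ (ball (0:E) 1) ≠ 0 := (measure_ball_pos μ 0 one_pos).ne'
  have hctop : μ (ball (0:E) 1) ≠ ⊤ := measure_ball_lt_top.ne
  have key : (S.card : ℝ≥0∞) * ENNReal.ofReal ((ε/2) ^ m) ≤ ENNReal.ofReal ((ε/2 + 1) ^ m) := by
    have : (S.card : ℝ≥0∞) * (ENNReal.ofReal ((ε/2) ^ m) * μ (ball 0 1))
        ≤ ENNReal.ofReal ((ε/2 + 1) ^ m) * μ (ball 0 1) := by
      calc (S.card : ℝ≥0∞) * (ENNReal.ofReal ((ε/2) ^ m) * μ (ball 0 1))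
          = ∑ x ∈ S, μ (ball x (ε/2)) := by
            rw [Finset.sum_congr rfl (fun x _ => hballs x), Finset.sum_const, nsmul_eq_mul]
        _ ≤ μ (ball x₀ (ε/2 + 1)) := hle
        _ = ENNReal.ofReal ((ε/2 + 1) ^ m) * μ (ball 0 1) := hbig
    rw [← mul_assoc] at this
    exact (ENNReal.mul_le_mul_iff_left hc0 hctop).mp this
  have hreal : (S.card : ℝ) * (ε/2) ^ m ≤ (ε/2 + 1) ^ m := by
    have h1' : ENNReal.ofReal ((S.card : ℝ) * (ε/2) ^ m) ≤ ENNReal.ofReal ((ε/2 + 1) ^ m) := by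
      rw [ENNReal.ofReal_mul (by positivity)]
      simpa [ENNReal.ofReal_natCast] using key
    exact (ENNReal.ofReal_le_ofReal_iff (by positivity)).mp h1'
  have hpow : (0:ℝ) < (ε/2) ^ m := by positivity
  calc (S.card : ℝ) ≤ (ε/2 + 1) ^ m / (ε/2) ^ m := by
        rw [le_div_iff₀ hpow]; exact hreal
    _ = ((2 + ε) / ε) ^ m := by
        rw [← div_pow]
        congr 1
        field_simp
        ring

/-- Any set satisfying the diameter and separation conditions for `sepMaxCard` has at most
`((2+ε)/ε)^d` elements. -/
lemma card_le_glue {d : ℕ}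
    (T : ℕ → (EuclideanSpace ℝ (Fin d) →ₗ[ℝ] EuclideanSpace ℝ (Fin d)))
    {ε : ℝ} (hε : 0 < ε) {n : ℕ} (S : Finset (EuclideanSpace ℝ (Fin d)))
    (hdiam : ∀ k < n, Metric.diam ((compMaps T k) '' (S : Set (EuclideanSpace ℝ (Fin d)))) ≤ 1)
    (hsep : ∀ x ∈ S, ∀ y ∈ S, x ≠ y → ∃ k < n, ε < ‖(compMaps T k) (x - y)‖) :
    (S.card : ℝ) ≤ ((2 + ε) / ε) ^ d := by
  have hbase1 : (1:ℝ) ≤ (2 + ε) / ε := by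
    rw [le_div_iff₀ hε]; linarith
  rcases Nat.eq_zero_or_pos n with rfl | hn
  · have hsub : S.card ≤ 1 := by
      apply Finset.card_le_one.mpr
      intro x hx y hy
      by_contra hne
      obtain ⟨k, hk, -⟩ := hsep x hx y hy hne
      omega
    calc (S.card : ℝ) ≤ 1 := by exact_mod_cast hsub
      _ ≤ ((2 + ε) / ε) ^ d := one_le_pow₀ hbase1
  · classical
    let E0 := EuclideanSpace ℝ (Fin d)
    let Φ : E0 →ₗ[ℝ] (Fin n → E0) := LinearMap.pi (fun k : Fin n => compMaps T k)
    have hΦle : ∀ x ∈ S, ∀ y ∈ S, ‖Φ x - Φ y‖ ≤ 1 := by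
      intro x hx y hy
      rw [← map_sub]
      apply pi_norm_le_iff_of_nonneg zero_le_one |>.mpr
      intro i
      have hb : Bornology.IsBounded ((compMaps T i) '' (S : Set E0)) :=
        ((S.finite_toSet).image _).isBounded
      have := dist_le_diam_of_mem hb
        (Set.mem_image_of_mem (compMaps T i) hx) (Set.mem_image_of_mem (compMaps T i) hy)
      have hd := hdiam i i.isLt
      simp only [Φ, LinearMap.pi_apply, map_sub]
      rw [← dist_eq_norm]
      exact le_trans this hd
    have hΦsep : ∀ x ∈ S, ∀ y ∈ S, x ≠ y → ε < ‖Φ x - Φ y‖ := by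
      intro x hx y hy hxy
      obtain ⟨k, hk, hklt⟩ := hsep x hx y hy hxy
      rw [← map_sub]
      calc ε < ‖(compMaps T k) (x - y)‖ := hklt
        _ = ‖Φ (x - y) ⟨k, hk⟩‖ := by simp [Φ, LinearMap.pi_apply]
        _ ≤ ‖Φ (x - y)‖ := norm_le_pi_norm _ _
    let V := LinearMap.range Φ
    let σ : E0 →ₗ[ℝ] ↥V := Φ.rangeRestrict
    have hσnorm : ∀ x y : E0, ‖σ x - σ y‖ = ‖Φ x - Φ y‖ := by
      intro x y; rfl
    have hinj : Set.InjOn σ (S : Set E0) := by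
      intro x hx y hy hxy
      by_contra hne
      have h := hΦsep x hx y hy hne
      have : ‖Φ x - Φ y‖ = 0 := by
        rw [← hσnorm, hxy, sub_self, norm_zero]
      linarith
    have hcard : (S.image σ).card = S.card := Finset.card_image_of_injOn hinj
    have hfin : Module.finrank ℝ ↥V ≤ d := by
      have := LinearMap.finrank_range_le Φ
      rwa [finrank_euclideanSpace_fin] at this
    have hbound := card_le_of_sep (E := ↥V) hε (S.image σ)
      (by
        intro a ha b hb
        obtain ⟨x, hx, rfl⟩ := Finset.mem_image.mp ha
        obtain ⟨y, hy, rfl⟩ := Finset.mem_image.mp hb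
        rw [hσnorm]; exact hΦle x hx y hy)
      (by
        intro a ha b hb hab
        obtain ⟨x, hx, rfl⟩ := Finset.mem_image.mp ha
        obtain ⟨y, hy, rfl⟩ := Finset.mem_image.mp hb
        have hxy : x ≠ y := fun h => hab (by rw [h])
        rw [hσnorm]; exact hΦsep x hx y hy hxy)
    rw [hcard] at hbound
    calc (S.card : ℝ) ≤ ((2 + ε) / ε) ^ Module.finrank ℝ ↥V := hbound
      _ ≤ ((2 + ε) / ε) ^ d := pow_le_pow_right₀ hbase1 hfin

/-- `sepMaxCard` is at least `1` and bounded above uniformly in `n`. -/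
lemma sepMaxCard_bounds {d : ℕ}
    (T : ℕ → (EuclideanSpace ℝ (Fin d) →ₗ[ℝ] EuclideanSpace ℝ (Fin d)))
    {ε : ℝ} (hε : 0 < ε) (n : ℕ) :
    1 ≤ sepMaxCard T ε n ∧ sepMaxCard T ε n ≤ ⌈((2 + ε) / ε) ^ d⌉₊ := by
  set A := {m : ℕ | ∃ S : Finset (EuclideanSpace ℝ (Fin d)), S.card = m ∧
    (∀ k < n, Metric.diam ((compMaps T k) '' (S : Set (EuclideanSpace ℝ (Fin d)))) ≤ 1) ∧
    (∀ x ∈ S, ∀ y ∈ S, x ≠ y → ∃ k < n, ε < ‖(compMaps T k) (x - y)‖)} with hA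
  have hub : ∀ m ∈ A, m ≤ ⌈((2 + ε) / ε) ^ d⌉₊ := by
    rintro m ⟨S, rfl, hdiam, hsep⟩
    have h1 := card_le_glue T hε S hdiam hsep
    have h2 : (S.card : ℝ) ≤ (⌈((2 + ε) / ε) ^ d⌉₊ : ℝ) := h1.trans (Nat.le_ceil _)
    exact_mod_cast h2
  have h1A : 1 ∈ A := by
    refine ⟨{0}, Finset.card_singleton _, ?_, ?_⟩
    · intro k hk
      simp only [Finset.coe_singleton, Set.image_singleton, map_zero, diam_singleton]
      exact zero_le_one
    · intro x hx y hy hxy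
      exact absurd (by
        rw [Finset.mem_singleton] at hx hy
        rw [hx, hy]) hxy
  constructor
  · exact le_csSup ⟨⌈((2 + ε) / ε) ^ d⌉₊, hub⟩ h1A
  · exact csSup_le ⟨1, h1A⟩ hub

theorem linear_maps_separated_sets_zero_entropy {d : ℕ} (hd : 1 ≤ d)
    (T : ℕ → (EuclideanSpace ℝ (Fin d) →ₗ[ℝ] EuclideanSpace ℝ (Fin d))) :
    Filter.Tendsto
      (fun ε : ℝ =>
        Filter.limsup (fun n : ℕ => Real.log (sepMaxCard T ε n) / n) Filter.atTop)
      (nhdsWithin 0 (Set.Ioi 0)) (nhds 0) := by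
  have key : ∀ ε : ℝ, 0 < ε →
      Filter.limsup (fun n : ℕ => Real.log (sepMaxCard T ε n) / n) Filter.atTop = 0 := by
    intro ε hε
    apply Filter.Tendsto.limsup_eq
    have h0 : ∀ n : ℕ, 0 ≤ Real.log (sepMaxCard T ε n) / n := by
      intro n
      apply div_nonneg _ (Nat.cast_nonneg n)
      apply Real.log_nonneg
      exact_mod_cast (sepMaxCard_bounds T hε n).1
    have hub : ∀ n : ℕ, Real.log (sepMaxCard T ε n) / n
        ≤ Real.log (⌈((2 + ε) / ε) ^ d⌉₊ : ℝ) / n := by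
      intro n
      gcongr
      · have : (1:ℝ) ≤ (sepMaxCard T ε n : ℝ) := by
          exact_mod_cast (sepMaxCard_bounds T hε n).1
        linarith
      · exact_mod_cast (sepMaxCard_bounds T hε n).2
    exact squeeze_zero h0 hub (tendsto_const_div_atTop_nhds_zero_nat _)
  refine Filter.Tendsto.congr' ?_ tendsto_const_nhds
  filter_upwards [self_mem_nhdsWithin] with ε hε
  exact (key ε hε).symm
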